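/- Let f : [0,1] → [0,1] be the map swapping digits 1 and 2 in the base-4 expansion. Then there do not exist x₁ < x₂ < x₃ < x₄ (with unique base-4 expansions) such that f(x₂) < f(x₄) < f(x₁) < f(x₃); i.e., the graph of f contains no occurrence of the pattern (3142). -/

import Mathlib

set_option maxHeartbeats 1000000

open MeasureTheory Set

/-- The digit substitution swapping 1 and 2, fixing 0 and 3. -/
def swapDigit : ℕ → ℕ
  | 1 => 2
  | 2 => 1
  | d => d

/-- The `n`-th digit (0-indexed) of `x` in base 4. -/
noncomputable def quatDigit (x : ℝ) (n : ℕ) : ℕ := (⌊x * 4 ^ (n + 1)⌋).toNat % 4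

/-- The map swapping digits 1 and 2 in the base-4 expansion. -/
noncomputable def swapMap (x : ℝ) : ℝ :=
  ∑' n : ℕ, (swapDigit (quatDigit x n) : ℝ) / 4 ^ (n + 1)

noncomputable def qA (x : ℝ) (n : ℕ) : ℤ := ⌊x * 4 ^ n⌋

lemma qA_le (x : ℝ) (n : ℕ) : (qA x n : ℝ) ≤ x * 4 ^ n := Int.floor_le _

lemma lt_qA (x : ℝ) (n : ℕ) : x * 4 ^ n < qA x n + 1 := Int.lt_floor_add_one _

lemma qA_nonneg {x : ℝ} (hx : 0 ≤ x) (n : ℕ) : 0 ≤ qA x n :=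
  Int.floor_nonneg.2 (by positivity)

lemma qA_succ_bounds (x : ℝ) (n : ℕ) :
    4 * qA x n ≤ qA x (n + 1) ∧ qA x (n + 1) < 4 * qA x n + 4 := by
  have h4 : x * 4 ^ (n + 1) = x * 4 ^ n * 4 := by ring
  constructor
  · apply Int.le_floor.2
    push_cast
    rw [h4]
    nlinarith [qA_le x n]
  · apply Int.floor_lt.2
    push_cast
    rw [h4]
    nlinarith [lt_qA x n]

lemma quatDigit_int {x : ℝ} (hx : 0 ≤ x) (n : ℕ) :
    (quatDigit x n : ℤ) = qA x (n + 1) - 4 * qA x n := by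
  have h := qA_succ_bounds x n
  have h0 : 0 ≤ qA x (n + 1) := qA_nonneg hx _
  have h1 : 0 ≤ qA x n := qA_nonneg hx _
  unfold quatDigit
  have : ⌊x * 4 ^ (n + 1)⌋ = qA x (n + 1) := rfl
  rw [this]
  push_cast
  omega

lemma quatDigit_lt (x : ℝ) (n : ℕ) : quatDigit x n < 4 := Nat.mod_lt _ (by norm_num)

lemma qA_mono {x y : ℝ} (h : x ≤ y) (n : ℕ) : qA x n ≤ qA y n :=
  Int.floor_le_floor (mul_le_mul_of_nonneg_right h (by positivity))

lemma qA_eq_of_le {x y : ℝ} (hxy : x ≤ y) {n : ℕ} (h : qA x n = qA y n) :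
    ∀ k, k ≤ n → qA x k = qA y k := by
  intro k hk
  by_contra hne
  have hlt : qA x k < qA y k := lt_of_le_of_ne (qA_mono hxy k) hne
  have hstep : ∀ m, qA x (k + m) < qA y (k + m) := by
    intro m
    induction m with
    | zero => simpa using hlt
    | succ m ih =>
      have hx' := qA_succ_bounds x (k + m)
      have hy' := qA_succ_bounds y (k + m)
      have he : k + (m + 1) = (k + m) + 1 := rfl
      rw [he]
      omega
  have := hstep (n - k)
  rw [Nat.add_sub_cancel' hk] at this
  omega

lemma eq_of_qA_eq {x y : ℝ} (h : ∀ n, qA x n = qA y n) : x = y := by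
  by_contra hne
  obtain ⟨n, hn⟩ := exists_pow_lt_of_lt_one (abs_pos.2 (sub_ne_zero.2 hne))
    (by norm_num : (1 / 4 : ℝ) < 1)
  have h1 := qA_le x n
  have h2 := lt_qA x n
  have h3 := qA_le y n
  have h4 := lt_qA y n
  rw [h n] at h1 h2
  have hp : (0 : ℝ) < 4 ^ n := by positivity
  have hq : (1 / 4 : ℝ) ^ n = 1 / 4 ^ n := by rw [div_pow, one_pow]
  have key : |x - y| < (1 / 4) ^ n := by
    rw [abs_sub_lt_iff, hq]
    constructor
    · rw [lt_div_iff₀ hp]; nlinarith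
    · rw [lt_div_iff₀ hp]; nlinarith
  linarith

lemma exists_first_diff {x y : ℝ} (hx : 0 ≤ x) (hy : y < 1) (hxy : x < y) :
    ∃ n, qA x n = qA y n ∧ qA x (n + 1) < qA y (n + 1) := by
  have hE : ∃ n, qA x n ≠ qA y n := by
    by_contra h
    push_neg at h
    exact absurd (eq_of_qA_eq h) (ne_of_lt hxy)
  classical
  have hspec := Nat.find_spec hE
  have h0x : qA x 0 = 0 := by
    unfold qA; simp [Int.floor_eq_zero_iff]
    constructor <;> nlinarith
  have h0y : qA y 0 = 0 := by
    unfold qA; simp [Int.floor_eq_zero_iff]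
    constructor <;> nlinarith
  have hm0 : Nat.find hE ≠ 0 := by
    intro h; rw [h, h0x, h0y] at hspec; exact hspec rfl
  obtain ⟨n, hn⟩ := Nat.exists_eq_succ_of_ne_zero hm0
  rw [hn] at hspec
  have hmin : qA x n = qA y n := by
    by_contra hne
    have := Nat.find_min' hE hne
    omega
  exact ⟨n, hmin, lt_of_le_of_ne (qA_mono (le_of_lt hxy) _) hspec⟩

lemma exists_digit_ne_three {x : ℝ} (hx : 0 ≤ x) (n : ℕ) :
    ∃ k, n < k ∧ quatDigit x k ≠ 3 := by
  by_contra h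
  push_neg at h
  have key : ∀ m, qA x (n + 1 + m) = 4 ^ m * (qA x (n + 1) + 1) - 1 := by
    intro m
    induction m with
    | zero => simp
    | succ m ih =>
      have hd := quatDigit_int hx (n + 1 + m)
      have h3 := h (n + 1 + m) (by omega)
      rw [h3] at hd
      have he : n + 1 + (m + 1) = (n + 1 + m) + 1 := rfl
      rw [he]
      have : qA x ((n + 1 + m) + 1) = 4 * qA x (n + 1 + m) + 3 := by push_cast at hd; omega
      rw [this, ih]; ring
  have hp : (0 : ℝ) < 4 ^ (n + 1) := by positivity
  have hpos : 0 < ((qA x (n + 1) : ℝ) + 1) / 4 ^ (n + 1) - x := by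
    have h2 := lt_qA x (n + 1)
    have : x < ((qA x (n + 1) : ℝ) + 1) / 4 ^ (n + 1) := by
      rw [lt_div_iff₀ hp]; linarith
    linarith
  have hub : ∀ m, ((qA x (n + 1) : ℝ) + 1) / 4 ^ (n + 1) - x ≤ (1 / 4 : ℝ) ^ (n + 1 + m) := by
    intro m
    have h1 := qA_le x (n + 1 + m)
    rw [key m] at h1
    push_cast at h1
    have hq : (0 : ℝ) < 4 ^ (n + 1 + m) := by positivity
    have hs : (4 : ℝ) ^ (n + 1 + m) = 4 ^ (n + 1) * 4 ^ m := by rw [pow_add]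
    have hdiv : (1 / 4 : ℝ) ^ (n + 1 + m) = 1 / 4 ^ (n + 1 + m) := by
      rw [div_pow, one_pow]
    rw [hdiv, le_div_iff₀ hq, sub_mul]
    have hexp : ((qA x (n + 1) : ℝ) + 1) / 4 ^ (n + 1) * 4 ^ (n + 1 + m)
        = ((qA x (n + 1) : ℝ) + 1) * 4 ^ m := by
      rw [hs]; field_simp
    rw [hexp]
    linarith
  obtain ⟨m, hm⟩ := exists_pow_lt_of_lt_one hpos (by norm_num : (1 / 4 : ℝ) < 1)
  have h1 := hub m
  have h2 : (1 / 4 : ℝ) ^ (n + 1 + m) ≤ (1 / 4) ^ m :=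
    pow_le_pow_of_le_one (by norm_num) (by norm_num) (by omega)
  linarith

lemma swapDigit_le_three {d : ℕ} (hd : d < 4) : swapDigit d ≤ 3 := by
  interval_cases d <;> decide

lemma F_le (z : ℝ) (k : ℕ) :
    (swapDigit (quatDigit z k) : ℝ) / 4 ^ (k + 1) ≤ 3 / 4 ^ (k + 1) := by
  apply div_le_div_of_nonneg_right ?_ (by positivity)
  exact_mod_cast swapDigit_le_three (quatDigit_lt z k)

lemma summable_geom_aux : Summable (fun k : ℕ => (3 : ℝ) / 4 ^ (k + 1)) := by
  apply Summable.congr ((summable_geometric_of_lt_one (by norm_num : (0:ℝ) ≤ 1/4)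
    (by norm_num)).mul_left (3 / 4 : ℝ))
  intro k
  rw [div_pow, one_pow, pow_succ]
  field_simp

lemma summable_F (z : ℝ) :
    Summable (fun k : ℕ => (swapDigit (quatDigit z k) : ℝ) / 4 ^ (k + 1)) :=
  Summable.of_nonneg_of_le (fun k => by positivity) (F_le z) summable_geom_aux

lemma tsum_geom_tail (n : ℕ) : ∑' k : ℕ, (3 : ℝ) / 4 ^ (k + (n + 1) + 1) = 1 / 4 ^ (n + 1) := by
  have h1 : ∀ k : ℕ, (3 : ℝ) / 4 ^ (k + (n + 1) + 1) = (3 / 4 ^ (n + 2)) * (1 / 4) ^ k := by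
    intro k
    rw [div_pow, one_pow]
    rw [show k + (n + 1) + 1 = (n + 2) + k by ring, pow_add]
    field_simp
  rw [tsum_congr h1, tsum_mul_left, tsum_geometric_of_lt_one (by norm_num) (by norm_num)]
  have h4 : (4 : ℝ) ^ (n + 2) = 4 ^ (n + 1) * 4 := by rw [pow_succ]
  rw [h4]
  norm_num
  ring

lemma swapMap_lt {x y : ℝ} (hx : 0 ≤ x) (n : ℕ)
    (hpre : ∀ k, k < n → quatDigit x k = quatDigit y k)
    (hn : swapDigit (quatDigit x n) < swapDigit (quatDigit y n)) :
    swapMap x < swapMap y := by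
  have hxs := summable_F x
  have hys := summable_F y
  have hxsplit := Summable.sum_add_tsum_nat_add (f := fun k : ℕ => (swapDigit (quatDigit x k) : ℝ) / 4 ^ (k + 1)) (n + 1) hxs
  have hysplit := Summable.sum_add_tsum_nat_add (f := fun k : ℕ => (swapDigit (quatDigit y k) : ℝ) / 4 ^ (k + 1)) (n + 1) hys
  have hswx : swapMap x = ∑' k : ℕ, (swapDigit (quatDigit x k) : ℝ) / 4 ^ (k + 1) := rfl
  have hswy : swapMap y = ∑' k : ℕ, (swapDigit (quatDigit y k) : ℝ) / 4 ^ (k + 1) := rfl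
  -- tail bounds
  have htailx : ∑' k : ℕ, (swapDigit (quatDigit x (k + (n + 1))) : ℝ) / 4 ^ ((k + (n + 1)) + 1)
      < 1 / 4 ^ (n + 1) := by
    obtain ⟨k0, hk0, hk3⟩ := exists_digit_ne_three hx n
    rw [← tsum_geom_tail n]
    have hle : (fun k : ℕ => (swapDigit (quatDigit x (k + (n + 1))) : ℝ) / 4 ^ ((k + (n + 1)) + 1))
        ≤ (fun k : ℕ => (3 : ℝ) / 4 ^ ((k + (n + 1)) + 1)) := fun k => F_le x (k + (n + 1))
    have hs1 : Summable (fun k : ℕ => (swapDigit (quatDigit x (k + (n + 1))) : ℝ) / 4 ^ ((k + (n + 1)) + 1)) :=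
      (summable_nat_add_iff (f := fun k : ℕ => (swapDigit (quatDigit x k) : ℝ) / 4 ^ (k + 1)) (n + 1)).2 hxs
    have hs2 : Summable (fun k : ℕ => (3 : ℝ) / 4 ^ ((k + (n + 1)) + 1)) :=
      (summable_nat_add_iff (f := fun k : ℕ => (3 : ℝ) / 4 ^ (k + 1)) (n + 1)).2 summable_geom_aux
    refine Summable.tsum_lt_tsum (i := k0 - (n + 1)) hle ?_ hs1 hs2
    have he : k0 - (n + 1) + (n + 1) = k0 := by omega
    rw [he]
    have hnum : (swapDigit (quatDigit x k0) : ℝ) < 3 := by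
      have h4 := quatDigit_lt x k0
      have : swapDigit (quatDigit x k0) < 3 := by
        have hd4 : quatDigit x k0 < 4 := h4
        interval_cases h : quatDigit x k0 <;> simp_all <;> decide
      exact_mod_cast this
    gcongr
  have htaily : 0 ≤ ∑' k : ℕ, (swapDigit (quatDigit y (k + (n + 1))) : ℝ) / 4 ^ ((k + (n + 1)) + 1) :=
    tsum_nonneg (fun k => by positivity)
  have hP : ∑ k ∈ Finset.range n, (swapDigit (quatDigit x k) : ℝ) / 4 ^ (k + 1)
      = ∑ k ∈ Finset.range n, (swapDigit (quatDigit y k) : ℝ) / 4 ^ (k + 1) := by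
    apply Finset.sum_congr rfl
    intro k hk
    rw [hpre k (Finset.mem_range.1 hk)]
  have hFn : (swapDigit (quatDigit x n) : ℝ) / 4 ^ (n + 1) + 1 / 4 ^ (n + 1)
      ≤ (swapDigit (quatDigit y n) : ℝ) / 4 ^ (n + 1) := by
    rw [← add_div]
    apply div_le_div_of_nonneg_right ?_ (by positivity)
    have : (swapDigit (quatDigit x n) : ℝ) + 1 ≤ (swapDigit (quatDigit y n) : ℝ) := by
      exact_mod_cast hn
    linarith
  rw [hswx, hswy, ← hxsplit, ← hysplit, Finset.sum_range_succ, Finset.sum_range_succ, hP]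
  linarith

lemma sigma_forced {a d : ℕ} (h : a < d) (hd : d < 4)
    (hs : ¬ swapDigit a < swapDigit d) : a = 1 ∧ d = 2 := by
  interval_cases d <;> interval_cases a <;> revert hs <;> decide

theorem stmt11 (x₁ x₂ x₃ x₄ : ℝ)
    (hmem : ∀ x ∈ ({x₁, x₂, x₃, x₄} : Set ℝ), x ∈ Icc (0 : ℝ) 1)
    (huniq : ∀ x ∈ ({x₁, x₂, x₃, x₄} : Set ℝ), ∀ (m : ℕ) (j : ℤ), x ≠ (j : ℝ) / 4 ^ m)
    (h12 : x₁ < x₂) (h23 : x₂ < x₃) (h34 : x₃ < x₄)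
    (hf24 : swapMap x₂ < swapMap x₄) (hf41 : swapMap x₄ < swapMap x₁)
    (hf13 : swapMap x₁ < swapMap x₃) : False := by
  have hx₁0 : (0:ℝ) ≤ x₁ := (hmem x₁ (by simp)).1
  have hx₂0 : (0:ℝ) ≤ x₂ := (hmem x₂ (by simp)).1
  have hx₃0 : (0:ℝ) ≤ x₃ := (hmem x₃ (by simp)).1
  have hx₄0 : (0:ℝ) ≤ x₄ := (hmem x₄ (by simp)).1
  have hx₄1 : x₄ < 1 := by
    have hle : x₄ ≤ 1 := (hmem x₄ (by simp)).2
    have hne := huniq x₄ (by simp) 0 1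
    simp at hne
    exact lt_of_le_of_ne hle hne
  have h14 : x₁ < x₄ := h12.trans (h23.trans h34)
  obtain ⟨n, hAeq, hAlt⟩ := exists_first_diff hx₁0 hx₄1 h14
  have hA14 : ∀ k, k ≤ n → qA x₁ k = qA x₄ k := qA_eq_of_le h14.le hAeq
  have hAall : ∀ k, k ≤ n → qA x₁ k = qA x₂ k ∧ qA x₂ k = qA x₃ k ∧ qA x₃ k = qA x₄ k := by
    intro k hk
    have e := hA14 k hk
    have a12 := qA_mono h12.le k
    have a23 := qA_mono h23.le k
    have a34 := qA_mono h34.le k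
    omega
  have hdig_eq : ∀ u v : ℝ, 0 ≤ u → 0 ≤ v → (∀ k, k ≤ n → qA u k = qA v k) →
      ∀ k, k < n → quatDigit u k = quatDigit v k := by
    intro u v hu hv hq k hk
    have h1 := quatDigit_int hu k
    have h2 := quatDigit_int hv k
    have e1 := hq k (by omega)
    have e2 := hq (k + 1) (by omega)
    omega
  have pre14 : ∀ k, k < n → quatDigit x₁ k = quatDigit x₄ k :=
    hdig_eq x₁ x₄ hx₁0 hx₄0 (fun k hk => hA14 k hk)
  have pre42 : ∀ k, k < n → quatDigit x₄ k = quatDigit x₂ k :=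
    hdig_eq x₄ x₂ hx₄0 hx₂0 (fun k hk => by have := hAall k hk; omega)
  have pre31 : ∀ k, k < n → quatDigit x₃ k = quatDigit x₁ k :=
    hdig_eq x₃ x₁ hx₃0 hx₁0 (fun k hk => by have := hAall k hk; omega)
  -- digits at position n
  have i1 := quatDigit_int hx₁0 n
  have i2 := quatDigit_int hx₂0 n
  have i3 := quatDigit_int hx₃0 n
  have i4 := quatDigit_int hx₄0 n
  have b12 := qA_mono h12.le (n + 1)
  have b23 := qA_mono h23.le (n + 1)
  have b34 := qA_mono h34.le (n + 1)
  have hAn := hAall n le_rfl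
  have hd12 : quatDigit x₁ n ≤ quatDigit x₂ n := by omega
  have hd23 : quatDigit x₂ n ≤ quatDigit x₃ n := by omega
  have hd34 : quatDigit x₃ n ≤ quatDigit x₄ n := by omega
  have hd14 : quatDigit x₁ n < quatDigit x₄ n := by omega
  have hd4lt : quatDigit x₄ n < 4 := quatDigit_lt x₄ n
  have hforced : quatDigit x₁ n = 1 ∧ quatDigit x₄ n = 2 := by
    apply sigma_forced hd14 hd4lt
    intro hs
    have := swapMap_lt hx₁0 n pre14 hs
    linarith
  obtain ⟨ha1, hd2⟩ := hforced
  have hb : quatDigit x₂ n = 1 ∨ quatDigit x₂ n = 2 := by omega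
  rcases hb with hb | hb
  · -- x₂ has digit 1, x₄ has digit 2 : swapMap x₄ < swapMap x₂
    have := swapMap_lt hx₄0 n pre42 (by rw [hb, hd2]; decide)
    linarith
  · -- x₂ has digit 2, hence x₃ has digit 2 : swapMap x₃ < swapMap x₁
    have hc : quatDigit x₃ n = 2 := by omega
    have := swapMap_lt hx₃0 n pre31 (by rw [hc, ha1]; decide)
    linarith
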